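/- Let R be an integral domain equipped with an absolute value v : AbsoluteValue R ℝ that is nonarchimedean, i.e., v(x + y) ≤ max(v(x), v(y)) for all x, y ∈ R, and define the Gauss norm of a polynomial p ∈ R[X] by ‖p‖ = (sup over i in the support of p of v(coeff i of p)), with ‖0‖ = 0. Then the Gauss norm is multiplicative: ‖p · q‖ = ‖p‖ · ‖q‖ for all p, q ∈ R[X]. -/

import Mathlib

open Polynomial

/-- The Gauss norm of a polynomial: the sup of the absolute values of its coefficients
over its support, with the zero polynomial getting norm `0`. -/
noncomputable def gaussNorm {R : Type*} [CommRing R] (v : AbsoluteValue R ℝ)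
    (p : Polynomial R) : ℝ :=
  if h : p.support.Nonempty then p.support.sup' h (fun i => v (p.coeff i)) else 0

section aux

variable {R : Type*} [CommRing R] (v : AbsoluteValue R ℝ)

lemma gaussNorm_nonneg (p : Polynomial R) : 0 ≤ gaussNorm v p := by
  unfold _root_.gaussNorm
  split
  · next h =>
    obtain ⟨i, hi⟩ := h
    exact le_trans (v.nonneg _) (Finset.le_sup' (fun i => v (p.coeff i)) hi)
  · exact le_refl _

lemma coeff_le_gaussNorm (p : Polynomial R) (i : ℕ) :
    v (p.coeff i) ≤ gaussNorm v p := by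
  by_cases hi : i ∈ p.support
  · rw [_root_.gaussNorm, dif_pos ⟨i, hi⟩]
    exact Finset.le_sup' (fun i => v (p.coeff i)) hi
  · rw [Polynomial.notMem_support_iff.mp hi, v.map_zero]
    exact gaussNorm_nonneg v p

lemma v_sum_le (hv : ∀ x y : R, v (x + y) ≤ max (v x) (v y))
    {ι : Type*} (s : Finset ι) (f : ι → R) (B : ℝ) (hB : 0 ≤ B)
    (h : ∀ i ∈ s, v (f i) ≤ B) : v (∑ i ∈ s, f i) ≤ B := by
  induction s using Finset.cons_induction with
  | empty => simpa using hB
  | cons a s ha ih =>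
    rw [Finset.sum_cons]
    refine le_trans (hv _ _) (max_le (h a (Finset.mem_cons_self a s)) ?_)
    exact ih fun i hi => h i (Finset.mem_cons_of_mem hi)

lemma v_sum_lt (hv : ∀ x y : R, v (x + y) ≤ max (v x) (v y))
    {ι : Type*} (s : Finset ι) (f : ι → R) (B : ℝ) (hB : 0 < B)
    (h : ∀ i ∈ s, v (f i) < B) : v (∑ i ∈ s, f i) < B := by
  induction s using Finset.cons_induction with
  | empty => simpa using hB
  | cons a s ha ih =>
    rw [Finset.sum_cons]
    refine lt_of_le_of_lt (hv _ _) (max_lt (h a (Finset.mem_cons_self a s)) ?_)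
    exact ih fun i hi => h i (Finset.mem_cons_of_mem hi)

lemma v_add_eq (hv : ∀ x y : R, v (x + y) ≤ max (v x) (v y))
    (a b : R) (hab : v b < v a) : v (a + b) = v a := by
  refine le_antisymm (le_trans (hv a b) (max_le le_rfl hab.le)) ?_
  have h2 := hv (a + b) (-b)
  rw [add_neg_cancel_right, v.map_neg] at h2
  rcases le_or_gt (v a) (v (a + b)) with h | h
  · exact h
  · exact absurd h2 (max_lt h hab).not_ge

end aux

/-- Gauss's lemma: over an integral domain, the Gauss norm of a nonarchimedean
absolute value is multiplicative. -/
theorem gaussNorm_mul {R : Type*} [CommRing R] [IsDomain R]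
    (v : AbsoluteValue R ℝ) (hv : ∀ x y : R, v (x + y) ≤ max (v x) (v y))
    (p q : Polynomial R) :
    gaussNorm v (p * q) = gaussNorm v p * gaussNorm v q := by
  by_cases hp : p = 0
  · simp [hp, _root_.gaussNorm]
  by_cases hq : q = 0
  · simp [hq, _root_.gaussNorm]
  have hpq : p * q ≠ 0 := mul_ne_zero hp hq
  set Np := gaussNorm v p with hNp
  set Nq := gaussNorm v q with hNq
  have hNppos : 0 < Np := by
    obtain ⟨i, hi⟩ := Polynomial.support_nonempty.mpr hp
    exact lt_of_lt_of_le (v.pos (Polynomial.mem_support_iff.mp hi)) (coeff_le_gaussNorm v p i)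
  have hNqpos : 0 < Nq := by
    obtain ⟨j, hj⟩ := Polynomial.support_nonempty.mpr hq
    exact lt_of_lt_of_le (v.pos (Polynomial.mem_support_iff.mp hj)) (coeff_le_gaussNorm v q j)
  -- existence of attaining indices
  have hPex : ∃ i, v (p.coeff i) = Np := by
    obtain ⟨i, _, hi⟩ := Finset.exists_mem_eq_sup' (Polynomial.support_nonempty.mpr hp)
      (fun i => v (p.coeff i))
    refine ⟨i, ?_⟩
    rw [hNp, _root_.gaussNorm, dif_pos (Polynomial.support_nonempty.mpr hp), hi]
  have hQex : ∃ j, v (q.coeff j) = Nq := by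
    obtain ⟨j, _, hj⟩ := Finset.exists_mem_eq_sup' (Polynomial.support_nonempty.mpr hq)
      (fun j => v (q.coeff j))
    refine ⟨j, ?_⟩
    rw [hNq, _root_.gaussNorm, dif_pos (Polynomial.support_nonempty.mpr hq), hj]
  set i₀ := Nat.find hPex with hi₀def
  set j₀ := Nat.find hQex with hj₀def
  have hi₀ : v (p.coeff i₀) = Np := Nat.find_spec hPex
  have hj₀ : v (q.coeff j₀) = Nq := Nat.find_spec hQex
  have hplt : ∀ i < i₀, v (p.coeff i) < Np := fun i hi =>
    lt_of_le_of_ne (coeff_le_gaussNorm v p i) (Nat.find_min hPex hi)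
  have hqlt : ∀ j < j₀, v (q.coeff j) < Nq := fun j hj =>
    lt_of_le_of_ne (coeff_le_gaussNorm v q j) (Nat.find_min hQex hj)
  -- the key coefficient has absolute value Np * Nq
  have hkey : v ((p * q).coeff (i₀ + j₀)) = Np * Nq := by
    rw [Polynomial.coeff_mul]
    have hmem : ((i₀, j₀) : ℕ × ℕ) ∈ Finset.HasAntidiagonal.antidiagonal (i₀ + j₀) := by
      simp [Finset.HasAntidiagonal.mem_antidiagonal]
    rw [← Finset.add_sum_erase _ _ hmem]
    have hrest : v (∑ x ∈ (Finset.HasAntidiagonal.antidiagonal (i₀ + j₀)).erase (i₀, j₀),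
        p.coeff x.1 * q.coeff x.2) < Np * Nq := by
      refine v_sum_lt v hv _ _ _ (mul_pos hNppos hNqpos) ?_
      rintro ⟨i, j⟩ hij
      obtain ⟨hne, hij'⟩ := Finset.mem_erase.mp hij
      rw [Finset.HasAntidiagonal.mem_antidiagonal] at hij'
      rw [v.map_mul]
      rcases lt_trichotomy i i₀ with h | h | h
      · calc v (p.coeff i) * v (q.coeff j)
            ≤ v (p.coeff i) * Nq :=
              mul_le_mul_of_nonneg_left (coeff_le_gaussNorm v q j) (v.nonneg _)
          _ < Np * Nq := (mul_lt_mul_iff_left₀ hNqpos).mpr (hplt i h)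
      · exfalso
        apply hne
        have : j = j₀ := by omega
        simp [h, this]
      · have hj : j < j₀ := by omega
        calc v (p.coeff i) * v (q.coeff j)
            ≤ Np * v (q.coeff j) :=
              mul_le_mul_of_nonneg_right (coeff_le_gaussNorm v p i) (v.nonneg _)
          _ < Np * Nq := (mul_lt_mul_iff_right₀ hNppos).mpr (hqlt j hj)
    rw [v_add_eq v hv _ _ (by rw [v.map_mul, hi₀, hj₀]; exact hrest)]
    rw [v.map_mul, hi₀, hj₀]
  refine le_antisymm ?_ ?_
  · rw [_root_.gaussNorm, dif_pos (Polynomial.support_nonempty.mpr hpq)]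
    refine Finset.sup'_le _ _ fun k _ => ?_
    rw [Polynomial.coeff_mul]
    refine v_sum_le v hv _ _ _ (mul_nonneg hNppos.le hNqpos.le) fun x _ => ?_
    rw [v.map_mul]
    exact mul_le_mul (coeff_le_gaussNorm v p x.1) (coeff_le_gaussNorm v q x.2)
      (v.nonneg _) hNppos.le
  · rw [← hkey]
    exact coeff_le_gaussNorm v (p * q) (i₀ + j₀)
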